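/- Let r < 0 and set a := √(−r). Suppose x : ℝ → ℝ is differentiable and satisfies x′(t) = r + x(t)² for all t ≥ 0, and x(0) < a. Then x(t) → −a as t → +∞; that is, the equilibrium −√(−r) of the canonical saddle-node ODE attracts every forward-global solution starting below √(−r). -/

import Mathlib

open Filter Set

/-- Solutions of a linear ODE `y' = c y` have the explicit exponential form. -/
lemma lin_ode_aux (y c : ℝ → ℝ) (hy : Differentiable ℝ y) (hc : Continuous c)
    (h : ∀ t, 0 ≤ t → deriv y t = c t * y t) :
    ∀ t, 0 ≤ t → y t = y 0 * Real.exp (∫ s in (0:ℝ)..t, c s) := by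
  intro t ht
  set F : ℝ → ℝ := fun u => ∫ s in (0:ℝ)..u, c s with hF
  have hFd : ∀ u, HasDerivAt F (c u) u := fun u =>
    (hc.integral_hasStrictDerivAt 0 u).hasDerivAt
  set g : ℝ → ℝ := fun u => y u * Real.exp (-F u) with hg
  have hgd : ∀ u, 0 ≤ u → HasDerivAt g 0 u := by
    intro u hu
    have h1 : HasDerivAt (fun v => Real.exp (-F v)) (-c u * Real.exp (-F u)) u := by
      simpa [mul_comm] using (((hFd u).neg).exp)
    have h2 : HasDerivAt g (deriv y u * Real.exp (-F u) + y u * (-c u * Real.exp (-F u))) u :=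
      ((hy u).hasDerivAt).mul h1
    have : deriv y u * Real.exp (-F u) + y u * (-c u * Real.exp (-F u)) = 0 := by
      rw [h u hu]; ring
    rwa [this] at h2
  have hconst : g t = g 0 := by
    have := constant_of_has_deriv_right_zero (f := g) (a := 0) (b := t)
      (fun u hu => ((hy u).hasDerivAt.mul (((hFd u).neg).exp)).continuousAt.continuousWithinAt)
      (fun u hu => ((hgd u hu.1).hasDerivWithinAt))
    exact this t ⟨ht, le_rfl⟩
  have hF0 : F 0 = 0 := by simp [hF]
  have : y t * Real.exp (-F t) = y 0 := by simpa [hg, hF0] using hconst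
  have hpos := Real.exp_pos (-F t)
  have := congrArg (fun z => z * Real.exp (F t)) this
  rw [mul_assoc, ← Real.exp_add, neg_add_cancel, Real.exp_zero, mul_one] at this
  exact this

/-- If the derivative is at most `-c` on `[0, ∞)`, the function decays linearly. -/
lemma decay_aux (x : ℝ → ℝ) (hx : Differentiable ℝ x) (c : ℝ)
    (h : ∀ t, 0 ≤ t → deriv x t ≤ -c) : ∀ t, 0 ≤ t → x t ≤ x 0 - c * t := by
  intro t ht
  have hmono : AntitoneOn (fun u => x u + c * u) (Ici (0:ℝ)) := by
    apply antitoneOn_of_deriv_nonpos (convex_Ici 0)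
    · exact (hx.add ((differentiable_id.const_mul c))).continuous.continuousOn
    · exact (hx.add ((differentiable_id.const_mul c))).differentiableOn
    · intro u hu
      rw [interior_Ici] at hu
      have hd : HasDerivAt (fun u => x u + c * u) (deriv x u + c) u := by
        simpa using ((hx u).hasDerivAt.fun_add ((hasDerivAt_id u).const_mul c))
      rw [hd.deriv]
      have := h u hu.le
      linarith
  have := hmono (self_mem_Ici) (mem_Ici.2 ht) ht
  simp only at this
  linarith

theorem stmt_0 (r : ℝ) (hr : r < 0) (x : ℝ → ℝ)
    (hx : Differentiable ℝ x)
    (hode : ∀ t : ℝ, 0 ≤ t → deriv x t = r + x t ^ 2)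
    (hinit : x 0 < Real.sqrt (-r)) :
    Filter.Tendsto x Filter.atTop (nhds (-Real.sqrt (-r))) := by
  set a := Real.sqrt (-r) with haa
  have ha : 0 < a := Real.sqrt_pos.2 (by linarith)
  have ha2 : a ^ 2 = -r := Real.sq_sqrt (by linarith)
  have hode' : ∀ t, 0 ≤ t → deriv x t = x t ^ 2 - a ^ 2 := by
    intro t ht; rw [hode t ht, ha2]; ring
  -- upper barrier: x t < a for t ≥ 0
  have haux1 : ∀ t, 0 ≤ t → x t - a = (x 0 - a) * Real.exp (∫ s in (0:ℝ)..t, (x s + a)) := by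
    have := lin_ode_aux (fun t => x t - a) (fun t => x t + a)
      (hx.sub_const a) (hx.continuous.add continuous_const)
      (by intro t ht; rw [deriv_sub_const, hode' t ht]; ring)
    simpa using this
  have hlt : ∀ t, 0 ≤ t → x t < a := by
    intro t ht
    have := haux1 t ht
    nlinarith [Real.exp_pos (∫ s in (0:ℝ)..t, (x s + a)), mul_pos (Real.exp_pos (∫ s in (0:ℝ)..t, (x s + a))) (show (0:ℝ) < a - x 0 by linarith)]
  -- lower barrier: sign of x t + a is the sign of x 0 + a
  have haux2 : ∀ t, 0 ≤ t → x t + a = (x 0 + a) * Real.exp (∫ s in (0:ℝ)..t, (x s - a)) := by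
    have := lin_ode_aux (fun t => x t + a) (fun t => x t - a)
      (hx.add_const a) (hx.continuous.sub continuous_const)
      (by intro t ht; rw [deriv_add_const, hode' t ht]; ring)
    simpa using this
  rcases lt_trichotomy (x 0 + a) 0 with hcase | hcase | hcase
  · -- x 0 < -a : solution increases to -a
    have hub : ∀ t, 0 ≤ t → x t < -a := by
      intro t ht
      have := haux2 t ht
      nlinarith [Real.exp_pos (∫ s in (0:ℝ)..t, (x s - a)),
        mul_pos (Real.exp_pos (∫ s in (0:ℝ)..t, (x s - a))) (show (0:ℝ) < -(x 0 + a) by linarith)]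
    have hmono : StrictMonoOn x (Ici (0:ℝ)) := by
      apply strictMonoOn_of_deriv_pos (convex_Ici 0) hx.continuous.continuousOn
      intro u hu
      rw [interior_Ici] at hu
      rw [hode' u hu.le]
      nlinarith [hub u hu.le, ha]
    rw [tendsto_order]
    constructor
    · intro b hb
      by_cases hbx : b < x 0
      · filter_upwards [eventually_ge_atTop (0:ℝ)] with t ht
        exact lt_of_lt_of_le hbx (hmono.monotoneOn self_mem_Ici (mem_Ici.2 ht) ht)
      · push_neg at hbx
        -- x 0 ≤ b < -a; show x eventually exceeds b
        have hT : ∃ T, 0 ≤ T ∧ b < x T := by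
          by_contra hcon
          push_neg at hcon
          set c := b ^ 2 - a ^ 2 with hc
          have hcpos : 0 < c := by nlinarith
          have hder : ∀ t, 0 ≤ t → deriv (fun t => -x t) t ≤ -c := by
            intro t ht
            rw [deriv.fun_neg, hode' t ht]
            have hxb := hcon t ht
            have hsq : b ^ 2 ≤ x t ^ 2 := by
              nlinarith [mul_nonneg (sub_nonneg.2 hxb) (show (0:ℝ) ≤ -(x t + b) by linarith)]
            simp only [hc]
            linarith
          have hnn : 0 ≤ (b - x 0) / c + 1 := by
            have := div_nonneg (sub_nonneg.2 hbx) hcpos.le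
            linarith
          have hdec := decay_aux (fun t => -x t) hx.neg c hder ((b - x 0) / c + 1) hnn
          have hfield : c * ((b - x 0) / c + 1) = (b - x 0) + c := by
            field_simp
          have := hcon ((b - x 0) / c + 1) hnn
          rw [hfield] at hdec
          linarith
        obtain ⟨T, hT0, hTb⟩ := hT
        filter_upwards [eventually_ge_atTop T] with t ht
        exact lt_of_lt_of_le hTb
          ((hmono.monotoneOn) (mem_Ici.2 hT0) (mem_Ici.2 (hT0.trans ht)) ht)
    · intro b hb
      filter_upwards [eventually_ge_atTop (0:ℝ)] with t ht
      exact lt_trans (hub t ht) (by linarith)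
  · -- x 0 = -a : constant solution
    have : ∀ t, 0 ≤ t → x t = -a := by
      intro t ht
      have := haux2 t ht
      rw [hcase, zero_mul] at this
      linarith
    have : x =ᶠ[atTop] fun _ => -a := by
      filter_upwards [eventually_ge_atTop (0:ℝ)] with t ht using this t ht
    exact Tendsto.congr' this.symm tendsto_const_nhds
  · -- -a < x 0 < a : solution decreases to -a
    have hlb : ∀ t, 0 ≤ t → -a < x t := by
      intro t ht
      have := haux2 t ht
      nlinarith [Real.exp_pos (∫ s in (0:ℝ)..t, (x s - a)),
        mul_pos (Real.exp_pos (∫ s in (0:ℝ)..t, (x s - a))) hcase]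
    have hanti : StrictAntiOn x (Ici (0:ℝ)) := by
      apply strictAntiOn_of_deriv_neg (convex_Ici 0) hx.continuous.continuousOn
      intro u hu
      rw [interior_Ici] at hu
      rw [hode' u hu.le]
      nlinarith [hlb u hu.le, hlt u hu.le]
    rw [tendsto_order]
    constructor
    · intro b hb
      filter_upwards [eventually_ge_atTop (0:ℝ)] with t ht
      exact lt_trans (by linarith) (hlb t ht)
    · intro b hb
      by_cases hba : a ≤ b
      · filter_upwards [eventually_ge_atTop (0:ℝ)] with t ht
        exact lt_of_lt_of_le (hlt t ht) hba
      · push_neg at hba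
        -- -a < b < a; show x eventually drops below b
        have hT : ∃ T, 0 ≤ T ∧ x T < b := by
          by_contra hcon
          push_neg at hcon
          have hb0 : b ≤ x 0 := hcon 0 le_rfl
          set m := max (b ^ 2) (x 0 ^ 2) with hm
          set c := a ^ 2 - m with hc
          have hx0a : -a < x 0 := by linarith
          have hx0a' : x 0 < a := hlt 0 le_rfl
          have hcpos : 0 < c := by
            have h1 : b ^ 2 < a ^ 2 := by nlinarith
            have h2 : x 0 ^ 2 < a ^ 2 := by nlinarith
            simp only [hc, hm, sub_pos, max_lt_iff]
            exact ⟨h1, h2⟩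
          have hder : ∀ t, 0 ≤ t → deriv x t ≤ -c := by
            intro t ht
            rw [hode' t ht]
            have hxb := hcon t ht
            have hxu : x t ≤ x 0 := (hanti.antitoneOn) self_mem_Ici (mem_Ici.2 ht) ht
            have hsq : x t ^ 2 ≤ m := by
              rcases le_or_gt 0 (x t) with h0 | h0
              · exact le_max_of_le_right (by nlinarith)
              · exact le_max_of_le_left (by nlinarith)
            simp only [hc]
            linarith
          have hnn : 0 ≤ (x 0 - b) / c + 1 := by
            have := div_nonneg (sub_nonneg.2 hb0) hcpos.le
            linarith
          have hdec := decay_aux x hx c hder ((x 0 - b) / c + 1) hnn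
          have hfield : c * ((x 0 - b) / c + 1) = (x 0 - b) + c := by
            field_simp
          have := hcon ((x 0 - b) / c + 1) hnn
          rw [hfield] at hdec
          linarith
        obtain ⟨T, hT0, hTb⟩ := hT
        filter_upwards [eventually_ge_atTop T] with t ht
        exact lt_of_le_of_lt
          ((hanti.antitoneOn) (mem_Ici.2 hT0) (mem_Ici.2 (hT0.trans ht)) ht) hTb
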